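/- The group homomorphism ρ from the free group on two generators x, y to SL₂(ℤ) determined by ρ(x) = [[1, 2], [0, 1]] (the matrix with rows (1, 2) and (0, 1)) and ρ(y) = [[1, 0], [2, 1]] (the matrix with rows (1, 0) and (2, 1)) is injective; in other words, these two matrices generate a free subgroup of rank 2 in SL₂(ℤ). -/
import Mathlib

open Matrix

namespace SanovAux

/-- Nonzero integer vectors in the plane. -/
abbrev V : Type := {v : Fin 2 → ℤ // v ≠ 0}

noncomputable instance : SMul (SpecialLinearGroup (Fin 2) ℤ) V where
  smul g v := ⟨(g : Matrix (Fin 2) (Fin 2) ℤ).mulVec v.1, by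
    intro h
    apply v.2
    have h2 : ((g⁻¹ : SpecialLinearGroup (Fin 2) ℤ) : Matrix (Fin 2) (Fin 2) ℤ).mulVec
        (((g : SpecialLinearGroup (Fin 2) ℤ) : Matrix (Fin 2) (Fin 2) ℤ).mulVec v.1) =
        ((g⁻¹ : SpecialLinearGroup (Fin 2) ℤ) : Matrix (Fin 2) (Fin 2) ℤ).mulVec 0 := by
      rw [h]
    rw [Matrix.mulVec_mulVec, Matrix.mulVec_zero] at h2
    have h3 : (((g⁻¹ * g : SpecialLinearGroup (Fin 2) ℤ)) : Matrix (Fin 2) (Fin 2) ℤ) = 1 := by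
      rw [inv_mul_cancel]; rfl
    rw [← Matrix.SpecialLinearGroup.coe_mul, h3, Matrix.one_mulVec] at h2
    exact h2⟩

lemma smul_def (g : SpecialLinearGroup (Fin 2) ℤ) (v : V) :
    (g • v).1 = (g : Matrix (Fin 2) (Fin 2) ℤ).mulVec v.1 := rfl

noncomputable instance : MulAction (SpecialLinearGroup (Fin 2) ℤ) V where
  one_smul v := by
    apply Subtype.ext
    show ((1 : SpecialLinearGroup (Fin 2) ℤ) : Matrix (Fin 2) (Fin 2) ℤ).mulVec v.1 = v.1
    rw [Matrix.SpecialLinearGroup.coe_one, Matrix.one_mulVec]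
  mul_smul g h v := by
    apply Subtype.ext
    show ((g * h : SpecialLinearGroup (Fin 2) ℤ) : Matrix (Fin 2) (Fin 2) ℤ).mulVec v.1 =
      (g : Matrix (Fin 2) (Fin 2) ℤ).mulVec ((h : Matrix (Fin 2) (Fin 2) ℤ).mulVec v.1)
    rw [Matrix.mulVec_mulVec, Matrix.SpecialLinearGroup.coe_mul]

lemma mulVec_two (a b c d : ℤ) (v : Fin 2 → ℤ) :
    (!![a, b; c, d]).mulVec v = ![a * v 0 + b * v 1, c * v 0 + d * v 1] := by
  funext i
  fin_cases i <;> simp [Matrix.mulVec, dotProduct, Fin.sum_univ_two]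

/-- `X 0`: slope `x/y ≥ 1`. -/
def X0 : Set V := {v | v.1 1 ≠ 0 ∧ 0 ≤ v.1 1 * (v.1 0 - v.1 1)}

/-- `Y 0`: slope `x/y < -1` or `y = 0` (the point at infinity). -/
def Y0 : Set V := {v | v.1 1 = 0 ∨ v.1 1 * (v.1 0 + v.1 1) < 0}

/-- `X 1`: slope `0 < x/y < 1`. -/
def X1 : Set V := {v | 0 < v.1 0 * v.1 1 ∧ v.1 1 * (v.1 0 - v.1 1) < 0}

/-- `Y 1`: slope `-1 ≤ x/y ≤ 0`. -/
def Y1 : Set V := {v | v.1 1 ≠ 0 ∧ v.1 0 * v.1 1 ≤ 0 ∧ 0 ≤ v.1 1 * (v.1 0 + v.1 1)}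

end SanovAux

open SanovAux in
/-- Sanov's theorem: the homomorphism `ρ` from the free group on two generators
`x = FreeGroup.of 0`, `y = FreeGroup.of 1` to `SL₂(ℤ)` determined by
`ρ(x) = !![1, 2; 0, 1]` and `ρ(y) = !![1, 0; 2, 1]` is injective; i.e. these two
matrices generate a free subgroup of rank 2 in `SL₂(ℤ)`. -/
theorem sanov_injective (ρ : FreeGroup (Fin 2) →* Matrix.SpecialLinearGroup (Fin 2) ℤ)
    (hx : (ρ (FreeGroup.of 0) : Matrix (Fin 2) (Fin 2) ℤ) = !![1, 2; 0, 1])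
    (hy : (ρ (FreeGroup.of 1) : Matrix (Fin 2) (Fin 2) ℤ) = !![1, 0; 2, 1]) :
    Function.Injective ρ := by
  classical
  set a : Fin 2 → SpecialLinearGroup (Fin 2) ℤ := fun i => ρ (FreeGroup.of i) with ha
  have hρ : ρ = FreeGroup.lift a := by
    apply FreeGroup.ext_hom
    intro i
    simp [ha]
  -- coordinate formulas for the four relevant matrices
  have hA : ∀ v : V, ((a 0) • v).1 = ![v.1 0 + 2 * v.1 1, v.1 1] := by
    intro v
    rw [smul_def, show ((a 0 : SpecialLinearGroup (Fin 2) ℤ) : Matrix (Fin 2) (Fin 2) ℤ)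
      = !![1, 2; 0, 1] from hx, mulVec_two]
    funext j; fin_cases j <;> simp <;> ring
  have hB : ∀ v : V, ((a 1) • v).1 = ![v.1 0, 2 * v.1 0 + v.1 1] := by
    intro v
    rw [smul_def, show ((a 1 : SpecialLinearGroup (Fin 2) ℤ) : Matrix (Fin 2) (Fin 2) ℤ)
      = !![1, 0; 2, 1] from hy, mulVec_two]
    funext j; fin_cases j <;> simp <;> ring
  have hxinv : (((a 0)⁻¹ : SpecialLinearGroup (Fin 2) ℤ) : Matrix (Fin 2) (Fin 2) ℤ)
      = !![1, -2; 0, 1] := by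
    rw [Matrix.SpecialLinearGroup.coe_inv,
      show ((a 0 : SpecialLinearGroup (Fin 2) ℤ) : Matrix (Fin 2) (Fin 2) ℤ)
        = !![1, 2; 0, 1] from hx, Matrix.adjugate_fin_two]
    norm_num
  have hyinv : (((a 1)⁻¹ : SpecialLinearGroup (Fin 2) ℤ) : Matrix (Fin 2) (Fin 2) ℤ)
      = !![1, 0; -2, 1] := by
    rw [Matrix.SpecialLinearGroup.coe_inv,
      show ((a 1 : SpecialLinearGroup (Fin 2) ℤ) : Matrix (Fin 2) (Fin 2) ℤ)
        = !![1, 0; 2, 1] from hy, Matrix.adjugate_fin_two]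
    norm_num
  have hAinv : ∀ v : V, ((a 0)⁻¹ • v).1 = ![v.1 0 - 2 * v.1 1, v.1 1] := by
    intro v
    rw [smul_def, hxinv, mulVec_two]
    funext j; fin_cases j <;> simp <;> ring
  have hBinv : ∀ v : V, ((a 1)⁻¹ • v).1 = ![v.1 0, v.1 1 - 2 * v.1 0] := by
    intro v
    rw [smul_def, hyinv, mulVec_two]
    funext j; fin_cases j <;> simp <;> ring
  rw [hρ]
  apply FreeGroup.injective_lift_of_ping_pong a ![X0, X1] ![Y0, Y1]
  · -- nonempty
    intro i
    fin_cases i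
    · exact ⟨⟨![1, 1], by intro h; exact one_ne_zero (congrFun h 0)⟩,
        show _ ∈ X0 from ⟨by norm_num, by norm_num⟩⟩
    · exact ⟨⟨![1, 2], by intro h; exact one_ne_zero (congrFun h 0)⟩,
        show _ ∈ X1 from ⟨by norm_num, by norm_num⟩⟩
  · -- X pairwise disjoint
    have key : Disjoint X0 X1 := by
      rw [Set.disjoint_left]
      rintro v ⟨-, h2⟩ ⟨-, h4⟩
      exact absurd h2 (not_le.mpr h4)
    intro i j hij
    fin_cases i <;> fin_cases j <;>
      first
        | exact absurd rfl hij
        | exact key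
        | exact key.symm
  · -- Y pairwise disjoint
    have key : Disjoint Y0 Y1 := by
      rw [Set.disjoint_left]
      rintro v h1 ⟨h2, -, h4⟩
      rcases h1 with h1 | h1
      · exact h2 h1
      · exact absurd h4 (not_le.mpr h1)
    intro i j hij
    fin_cases i <;> fin_cases j <;>
      first
        | exact absurd rfl hij
        | exact key
        | exact key.symm
  · -- X i disjoint from Y j
    have k00 : Disjoint X0 Y0 := by
      rw [Set.disjoint_left]
      rintro v ⟨h1, h2⟩ h3
      rcases h3 with h3 | h3
      · exact h1 h3
      · have hy2 : 0 < v.1 1 * v.1 1 := by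
          rcases lt_or_gt_of_ne h1 with h | h <;> nlinarith
        nlinarith
    have k01 : Disjoint X0 Y1 := by
      rw [Set.disjoint_left]
      rintro v ⟨h1, h2⟩ ⟨h3, h4, h5⟩
      have hy2 : 0 < v.1 1 * v.1 1 := by
        rcases lt_or_gt_of_ne h1 with h | h <;> nlinarith
      nlinarith
    have k10 : Disjoint X1 Y0 := by
      rw [Set.disjoint_left]
      rintro v ⟨h1, h2⟩ h3
      rcases h3 with h3 | h3
      · rw [h3] at h1; simp at h1
      · nlinarith
    have k11 : Disjoint X1 Y1 := by
      rw [Set.disjoint_left]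
      rintro v ⟨h1, -⟩ ⟨-, h2, -⟩
      exact absurd h2 (not_le.mpr h1)
    intro i j
    fin_cases i <;> fin_cases j <;> first | exact k00 | exact k01 | exact k10 | exact k11
  · -- a i • (Y i)ᶜ ⊆ X i
    intro i
    rintro - ⟨v, hv, rfl⟩
    fin_cases i
    · -- v ∉ Y0 → A v ∈ X0
      have hv' : ¬ (v.1 1 = 0 ∨ v.1 1 * (v.1 0 + v.1 1) < 0) := hv
      push_neg at hv'
      obtain ⟨h1, h2⟩ := hv'
      show ((a 0) • v).1 1 ≠ 0 ∧ 0 ≤ ((a 0) • v).1 1 * (((a 0) • v).1 0 - ((a 0) • v).1 1)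
      refine ⟨?_, ?_⟩ <;> rw [hA v] <;> simp only [Matrix.cons_val_zero,
        Matrix.cons_val_one, Matrix.head_cons]
      · exact h1
      · nlinarith
    · -- v ∉ Y1 → B v ∈ X1
      have hv' : ¬ (v.1 1 ≠ 0 ∧ v.1 0 * v.1 1 ≤ 0 ∧ 0 ≤ v.1 1 * (v.1 0 + v.1 1)) := hv
      show 0 < ((a 1) • v).1 0 * ((a 1) • v).1 1 ∧
        ((a 1) • v).1 1 * (((a 1) • v).1 0 - ((a 1) • v).1 1) < 0
      refine ⟨?_, ?_⟩ <;> rw [hB v] <;> simp only [Matrix.cons_val_zero,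
        Matrix.cons_val_one, Matrix.head_cons] <;>
      · set p := v.1 0 with hp
        set q := v.1 1 with hq
        by_cases hq0 : q = 0
        · have hp0 : p ≠ 0 := by
            intro hp0
            exact v.2 (funext fun j => by fin_cases j <;> assumption)
          rcases lt_or_gt_of_ne hp0 with h | h <;> nlinarith
        · rcases (not_and.mp hv' hq0 |> not_and_or.mp) with h | h
          · push_neg at h
            nlinarith [sq_nonneg p, sq_nonneg q, sq_nonneg (p + q), h]
          · push_neg at h
            nlinarith [sq_nonneg p, sq_nonneg q, sq_nonneg (p + q), h]
  · -- (a i)⁻¹ • (X i)ᶜ ⊆ Y i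
    intro i
    rintro - ⟨v, hv, rfl⟩
    fin_cases i
    · -- v ∉ X0 → A⁻¹ v ∈ Y0
      have hv' : ¬ (v.1 1 ≠ 0 ∧ 0 ≤ v.1 1 * (v.1 0 - v.1 1)) := hv
      show ((a 0)⁻¹ • v).1 1 = 0 ∨
        ((a 0)⁻¹ • v).1 1 * (((a 0)⁻¹ • v).1 0 + ((a 0)⁻¹ • v).1 1) < 0
      rw [hAinv v]
      simp only [Matrix.cons_val_zero, Matrix.cons_val_one, Matrix.head_cons]
      by_cases hq0 : v.1 1 = 0
      · exact Or.inl hq0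
      · refine Or.inr ?_
        have h2 : ¬ 0 ≤ v.1 1 * (v.1 0 - v.1 1) := fun h => hv' ⟨hq0, h⟩
        push_neg at h2
        nlinarith
    · -- v ∉ X1 → B⁻¹ v ∈ Y1
      have hv' : ¬ (0 < v.1 0 * v.1 1 ∧ v.1 1 * (v.1 0 - v.1 1) < 0) := hv
      show ((a 1)⁻¹ • v).1 1 ≠ 0 ∧ ((a 1)⁻¹ • v).1 0 * ((a 1)⁻¹ • v).1 1 ≤ 0 ∧
        0 ≤ ((a 1)⁻¹ • v).1 1 * (((a 1)⁻¹ • v).1 0 + ((a 1)⁻¹ • v).1 1)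
      rw [hBinv v]
      simp only [Matrix.cons_val_zero, Matrix.cons_val_one, Matrix.head_cons]
      set p := v.1 0 with hp
      set q := v.1 1 with hq
      by_cases hp0 : p = 0
      · have hq0 : q ≠ 0 := by
          intro hq0
          exact v.2 (funext fun j => by fin_cases j <;> assumption)
        have e1 : p * q = 0 := by rw [hp0]; ring
        have e2 : p * p = 0 := by rw [hp0]; ring
        refine ⟨by simpa [hp0] using hq0, by simp [hp0],
          by nlinarith [sq_nonneg q, e1, e2]⟩
      · have hsp : 0 < p * p := by
          rcases lt_or_gt_of_ne hp0 with h | h <;> nlinarith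
        have hkey : p * (q - 2 * p) < 0 ∧ 0 ≤ (q - 2 * p) * (p + (q - 2 * p)) := by
          by_cases hc : p * q ≤ 0
          · constructor <;> nlinarith
          · push_neg at hc
            have h2 : 0 ≤ q * (p - q) := by
              by_contra h3
              push_neg at h3
              exact hv' ⟨hc, h3⟩
            have hq0 : q ≠ 0 := by intro h0; rw [h0] at hc; simp at hc
            have hsq : 0 < q * q := by
              rcases lt_or_gt_of_ne hq0 with h | h <;> nlinarith
            constructor <;> nlinarith
        refine ⟨?_, le_of_lt hkey.1, hkey.2⟩
        intro h0
        have : p * (q - 2 * p) = 0 := by rw [h0]; ring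
        exact absurd this (ne_of_lt hkey.1)
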